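/- Let X be a topological space possessing a countable family G of continuous real-valued functions such that for every finite family U_1,…,U_n of pairwise disjoint nonempty open sets and reals r_1,…,r_n there exists g ∈ G with g⁻¹(r_j) ∩ U_j ≠ ∅ for each j. Then C_h(X) is separable. -/

import Mathlib

open Set

/-- The open-point topology on `C(X, ℝ)`. -/
def openPointTopology (X : Type*) [TopologicalSpace X] : TopologicalSpace C(X, ℝ) :=
  TopologicalSpace.generateFrom
    { S | ∃ (U : Set X) (r : ℝ), IsOpen U ∧ S = { f : C(X, ℝ) | ∃ x ∈ U, f x = r } }

private lemma key_lemma {X : Type*} [TopologicalSpace X] (G : Set C(X, ℝ))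
    (hG : ∀ (n : ℕ) (U : Fin n → Set X) (r : Fin n → ℝ),
      (∀ j, IsOpen (U j)) → (∀ j, (U j).Nonempty) → Pairwise (Function.onFun Disjoint U) →
      ∃ g ∈ G, ∀ j, ∃ x ∈ U j, g x = r j)
    (ι : Type*) [Fintype ι] (V : ι → Set X) (r : ι → ℝ)
    (hVo : ∀ i, IsOpen (V i)) (hVne : ∀ i, (V i).Nonempty)
    (hd : ∀ i j, r i ≠ r j → Disjoint (V i) (V j)) :
    ∃ g ∈ G, ∀ i, ∃ x ∈ V i, g x = r i := by
  classical
  set W : Finset ι → Set X := fun T => ⋂ i ∈ T, V i with hW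
  have hrconst : ∀ T : Finset ι, (W T).Nonempty → ∀ i ∈ T, ∀ j ∈ T, r i = r j := by
    rintro T ⟨x, hx⟩ i hi j hj
    simp only [hW, Set.mem_iInter] at hx
    by_contra h
    exact Set.disjoint_left.mp (hd i j h) (hx i hi) (hx j hj)
  have hTex : ∀ i : ι, ∃ T : Finset ι, (i ∈ T ∧ (W T).Nonempty) ∧
      ∀ T' : Finset ι, (i ∈ T' ∧ (W T').Nonempty) → T'.card ≤ T.card := by
    intro i
    have hne : (Finset.univ.filter fun T : Finset ι => i ∈ T ∧ (W T).Nonempty).Nonempty := by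
      refine ⟨{i}, ?_⟩
      simpa [hW, Set.Nonempty] using hVne i
    obtain ⟨T, hT, hmax⟩ := Finset.exists_max_image _ Finset.card hne
    simp only [Finset.mem_filter, Finset.mem_univ, true_and] at hT hmax
    exact ⟨T, hT, fun T' h => hmax T' h⟩
  choose T hT hTmax using hTex
  have hdisjT : ∀ i j : ι, T i ≠ T j → Disjoint (W (T i)) (W (T j)) := by
    intro i j hne
    rw [Set.disjoint_left]
    intro x hxi hxj
    have hxu : x ∈ W (T i ∪ T j) := by
      simp only [hW, Set.mem_iInter] at hxi hxj ⊢
      intro k hk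
      rcases Finset.mem_union.mp hk with h | h
      exacts [hxi k h, hxj k h]
    have h1 : (T i ∪ T j).card ≤ (T i).card :=
      hTmax i _ ⟨Finset.mem_union_left _ (hT i).1, ⟨x, hxu⟩⟩
    have h2 : (T i ∪ T j).card ≤ (T j).card :=
      hTmax j _ ⟨Finset.mem_union_right _ (hT j).1, ⟨x, hxu⟩⟩
    have e1 : T i = T i ∪ T j :=
      Finset.eq_of_subset_of_card_le Finset.subset_union_left h1
    have e2 : T j = T i ∪ T j :=
      Finset.eq_of_subset_of_card_le Finset.subset_union_right h2
    exact hne (e1.trans e2.symm)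
  set Ts : Finset (Finset ι) := Finset.univ.image T with hTs
  have hmem : ∀ S ∈ Ts, ∃ i, T i = S := by
    intro S hS
    simpa [hTs] using Finset.mem_image.mp hS
  let e := Ts.equivFin
  set n := Ts.card with hn
  let Wf : Fin n → Set X := fun k => W ((e.symm k : { x // x ∈ Ts }) : Finset ι)
  have hWne : ∀ k, (Wf k).Nonempty := by
    intro k
    obtain ⟨i, hi⟩ := hmem _ (e.symm k).2
    show (W _).Nonempty
    rw [← hi]
    exact (hT i).2
  have hTne : ∀ k : Fin n, ((e.symm k : { x // x ∈ Ts }) : Finset ι).Nonempty := by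
    intro k
    obtain ⟨i, hi⟩ := hmem _ (e.symm k).2
    exact ⟨i, hi ▸ (hT i).1⟩
  let ρ : Fin n → ℝ := fun k => r (hTne k).choose
  have hρ : ∀ k, ∀ i ∈ ((e.symm k : { x // x ∈ Ts }) : Finset ι), ρ k = r i := by
    intro k i hi
    exact hrconst _ (hWne k) _ (hTne k).choose_spec _ hi
  have hWo : ∀ k, IsOpen (Wf k) := fun k => isOpen_biInter_finset fun i _ => hVo i
  have hWd : Pairwise (Function.onFun Disjoint Wf) := by
    intro k l hkl
    have h1 : ((e.symm k : { x // x ∈ Ts }) : Finset ι) ≠ ((e.symm l : { x // x ∈ Ts }) : Finset ι) := by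
      intro h
      exact hkl (by
        have := Subtype.coe_injective h
        exact e.symm.injective this ▸ rfl)
    obtain ⟨i, hi⟩ := hmem _ (e.symm k).2
    obtain ⟨j, hj⟩ := hmem _ (e.symm l).2
    have : T i ≠ T j := by rw [hi, hj]; exact h1
    have hd' := hdisjT i j this
    show Disjoint (W _) (W _)
    rw [← hi, ← hj]
    exact hd'
  obtain ⟨g, hgG, hg⟩ := hG n Wf ρ hWo hWne hWd
  refine ⟨g, hgG, fun i => ?_⟩
  have hTi : T i ∈ Ts := Finset.mem_image_of_mem T (Finset.mem_univ i)
  let k := e ⟨T i, hTi⟩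
  obtain ⟨x, hxW, hgx⟩ := hg k
  have hek : ((e.symm k : { x // x ∈ Ts }) : Finset ι) = T i := by
    show ((e.symm (e ⟨T i, hTi⟩) : { x // x ∈ Ts }) : Finset ι) = T i
    rw [Equiv.symm_apply_apply]
  have hiTk : i ∈ ((e.symm k : { x // x ∈ Ts }) : Finset ι) := hek ▸ (hT i).1
  refine ⟨x, ?_, ?_⟩
  · have : x ∈ W ((e.symm k : { x // x ∈ Ts }) : Finset ι) := hxW
    simp only [hW, Set.mem_iInter] at this
    exact this i hiTk
  · rw [hgx, hρ k i hiTk]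

theorem dense_family_openPoint_separable (X : Type*) [TopologicalSpace X]
    (G : Set C(X, ℝ)) (hGc : G.Countable)
    (hG : ∀ (n : ℕ) (U : Fin n → Set X) (r : Fin n → ℝ),
      (∀ j, IsOpen (U j)) → (∀ j, (U j).Nonempty) → Pairwise (Function.onFun Disjoint U) →
      ∃ g ∈ G, ∀ j, ∃ x ∈ U j, g x = r j) :
    @TopologicalSpace.SeparableSpace C(X, ℝ) (openPointTopology X) := by
  classical
  letI t := openPointTopology X
  refine ⟨⟨G, hGc, ?_⟩⟩
  have hb : TopologicalSpace.IsTopologicalBasis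
      ((fun F => Set.sInter F) '' {F : Set (Set C(X, ℝ)) | F.Finite ∧
        F ⊆ { S | ∃ (U : Set X) (r : ℝ), IsOpen U ∧ S = { f : C(X, ℝ) | ∃ x ∈ U, f x = r } }}) :=
    TopologicalSpace.isTopologicalBasis_of_subbasis rfl
  rw [hb.dense_iff]
  rintro o ⟨F, ⟨hFfin, hFsub⟩, rfl⟩ ⟨f, hf⟩
  haveI := hFfin.fintype
  choose U R hUo hUeq using fun s : F => hFsub s.2
  have hfw : ∀ s : F, ∃ x ∈ U s, f x = R s := by
    intro s
    have : f ∈ (s : Set C(X, ℝ)) := hf s s.2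
    rwa [hUeq s] at this
  choose w hwU hwf using hfw
  -- separation radius
  set Rs : Finset ℝ := Finset.univ.image R with hRs
  set D : Finset ℝ := ((Rs ×ˢ Rs).filter fun p => p.1 ≠ p.2).image fun p => |p.1 - p.2| with hD
  set ε : ℝ := if h : D.Nonempty then D.min' h / 2 else 1 with hε
  have hεpos : 0 < ε := by
    rw [hε]
    split_ifs with h
    · have := Finset.min'_mem D h
      obtain ⟨p, hp, hpe⟩ := Finset.mem_image.mp this
      rw [Finset.mem_filter] at hp
      have h0 : 0 < |p.1 - p.2| := abs_pos.mpr (sub_ne_zero.mpr hp.2)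
      linarith [hpe, h0]
    · norm_num
  have hsep : ∀ s t : F, R s ≠ R t → 2 * ε ≤ |R s - R t| := by
    intro s t hst
    have hmem : |R s - R t| ∈ D := by
      rw [hD]
      refine Finset.mem_image.mpr ⟨(R s, R t), ?_, rfl⟩
      rw [Finset.mem_filter]
      exact ⟨Finset.mem_product.mpr ⟨Finset.mem_image_of_mem R (Finset.mem_univ s),
        Finset.mem_image_of_mem R (Finset.mem_univ t)⟩, hst⟩
    have hne : D.Nonempty := ⟨_, hmem⟩
    rw [hε]
    rw [dif_pos hne]
    have := Finset.min'_le D _ hmem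
    linarith
  set V : F → Set X := fun s => U s ∩ (f : C(X, ℝ)) ⁻¹' Metric.ball (R s) ε with hV
  have hVo : ∀ s, IsOpen (V s) := fun s =>
    (hUo s).inter (Metric.isOpen_ball.preimage f.continuous)
  have hVne : ∀ s, (V s).Nonempty := by
    intro s
    refine ⟨w s, hwU s, ?_⟩
    simp [Metric.mem_ball, hwf s, hεpos]
  have hVd : ∀ s t, R s ≠ R t → Disjoint (V s) (V t) := by
    intro s t hst
    rw [Set.disjoint_left]
    rintro y ⟨-, hys⟩ ⟨-, hyt⟩
    rw [Set.mem_preimage, Metric.mem_ball, Real.dist_eq] at hys hyt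
    have h2 := hsep s t hst
    have : |R s - R t| < 2 * ε := by
      have := abs_sub_abs_le_abs_sub (f y - R t) (f y - R s)
      calc |R s - R t| = |(f y - R t) - (f y - R s)| := by ring_nf
        _ ≤ |f y - R t| + |f y - R s| := abs_sub _ _
        _ < 2 * ε := by linarith
    linarith
  obtain ⟨g, hgG, hg⟩ := key_lemma G hG F V R hVo hVne hVd
  refine ⟨g, ?_, hgG⟩
  intro s hs
  obtain ⟨x, hxV, hgx⟩ := hg ⟨s, hs⟩
  have h' : s = {f : C(X, ℝ) | ∃ x ∈ U ⟨s, hs⟩, f x = R ⟨s, hs⟩} := hUeq ⟨s, hs⟩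
  rw [h']
  exact ⟨x, hxV.1, hgx⟩
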